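/- Fix γ > 0, ω > 0 and λ > 0, and for 0 < r < γ·e^{−ωλ} define D(ω, r, λ) := (1/λ²)·(sinh(ωλ) + e^{−ωλ}·(1 − γ/r)·(1 − e^{ωλ} − (γ/r)·log((e^{ωλ}·r − γ)/(r − γ)))), with log the real logarithm (the argument of the logarithm is positive on this range). Then the limit of D(ω, r, λ)/r as r → 0 from the right equals −(cosh(ωλ) − 1)·(1 + 2·e^{ωλ})/(3·λ²·γ). -/

import Mathlib

open Filter

/-- The time part `D(ω,r)` of the noncommutative black-hole wave operator
acting on a Fourier mode `e^{iωt}` (Proposition 5.3 of the paper), with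
deformation parameter `lam` (the Planck time). -/
noncomputable def Dfun (γ ω r lam : ℝ) : ℝ :=
  (1 / lam ^ 2) *
    (Real.sinh (ω * lam) +
      Real.exp (-(ω * lam)) * (1 - γ / r) *
        (1 - Real.exp (ω * lam) -
          (γ / r) * Real.log ((Real.exp (ω * lam) * r - γ) / (r - γ))))

/-- Third-order Taylor remainder of `log (1 - t)` at `0`. -/
noncomputable def Efun (t : ℝ) : ℝ :=
  Real.log (1 - t) + (t + t ^ 2 / 2 + t ^ 3 / 3)

/-- The remainder combination appearing in the expansion of `Dfun`. -/
noncomputable def Ffun (a γ r : ℝ) : ℝ :=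
  Real.log (1 - a * (r / γ)) - Real.log (1 - r / γ)
    + (a - 1) * (r / γ) + (a ^ 2 - 1) * (r / γ) ^ 2 / 2
    + (a ^ 3 - 1) * (r / γ) ^ 3 / 3

lemma Efun_abs_le {t : ℝ} (h0 : 0 ≤ t) (h : t ≤ 1 / 2) :
    |Efun t| ≤ 2 * t ^ 4 := by
  have h1 : |t| < 1 := by rw [abs_of_nonneg h0]; linarith
  have hb := Real.abs_log_sub_add_sum_range_le h1 3
  have hsum : (∑ i ∈ Finset.range 3, t ^ (i + 1) / (i + 1)) =
      t + t ^ 2 / 2 + t ^ 3 / 3 := by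
    norm_num [Finset.sum_range_succ]
  rw [hsum] at hb
  have habs : |Efun t| = |(t + t ^ 2 / 2 + t ^ 3 / 3) + Real.log (1 - t)| := by
    rw [Efun, add_comm]
  rw [habs, abs_of_nonneg h0] at *
  have h2 : t ^ 4 / (1 - t) ≤ 2 * t ^ 4 := by
    rw [div_le_iff₀ (by linarith)]
    nlinarith [pow_nonneg h0 4]
  linarith

lemma Ffun_eq (a γ r : ℝ) : Ffun a γ r = Efun (a * (r / γ)) - Efun (r / γ) := by
  simp only [Ffun, Efun]; ring

/- Item (d) of Section 5.2: near the classical singularity r = 0 (within the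
black-hole interior region 0 < r < γ·e^{−ωλ}) one has
D(ω,r,λ)/r → −(cosh(ωλ) − 1)(1 + 2e^{ωλ})/(3λ²γ). -/

theorem Dfun_limit_at_origin (γ ω lam : ℝ) (hγ : 0 < γ) (hω : 0 < ω)
    (hlam : 0 < lam) :
    Tendsto (fun r => Dfun γ ω r lam / r)
      (nhdsWithin 0 (Set.Ioo 0 (γ * Real.exp (-(ω * lam)))))
      (nhds (-((Real.cosh (ω * lam) - 1) * (1 + 2 * Real.exp (ω * lam)))
        / (3 * lam ^ 2 * γ))) := by
  have hl2 : (0:ℝ) < lam ^ 2 := by positivity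
  set a : ℝ := Real.exp (ω * lam) with ha_def
  have ha : 0 < a := Real.exp_pos _
  have ha1 : 1 < a := by
    have := Real.add_one_le_exp (ω * lam)
    have := mul_pos hω hlam
    simp only [ha_def]; linarith
  set m : ℝ := γ * Real.exp (-(ω * lam)) with hm_def
  have hm_eq : m = γ * a⁻¹ := by rw [hm_def, Real.exp_neg]
  have hm0 : 0 < m := by rw [hm_eq]; positivity
  set c0 : ℝ := a⁻¹ * ((a ^ 2 - 1) / 2 - (a ^ 3 - 1) / 3) / (lam ^ 2 * γ) with hc0
  set c1 : ℝ := a⁻¹ * (a ^ 3 - 1) / (3 * lam ^ 2 * γ ^ 2) with hc1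
  set k3 : ℝ := a⁻¹ * γ ^ 2 / lam ^ 2 with hk3
  set k2 : ℝ := a⁻¹ * γ / lam ^ 2 with hk2
  -- the key algebraic identity on the interior region
  have key : ∀ r ∈ Set.Ioo (0:ℝ) m,
      Dfun γ ω r lam / r =
        c0 + c1 * r + k3 * (Ffun a γ r / r ^ 3) - k2 * (Ffun a γ r / r ^ 2) := by
    rintro r ⟨hr0, hrm⟩
    have har : a * r < γ := by
      have : a * r < a * m := by exact (mul_lt_mul_iff_right₀ ha).2 hrm
      rw [hm_eq] at this
      calc a * r < a * (γ * a⁻¹) := this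
        _ = γ := by field_simp
    have hrγ : r < γ := by nlinarith
    have h1 : (0:ℝ) < 1 - a * (r / γ) := by
      rw [sub_pos, mul_div_assoc', div_lt_one hγ]; exact har
    have h2 : (0:ℝ) < 1 - r / γ := by
      rw [sub_pos, div_lt_one hγ]; exact hrγ
    have hlog : Real.log ((a * r - γ) / (r - γ)) =
        Real.log (1 - a * (r / γ)) - Real.log (1 - r / γ) := by
      rw [show (a * r - γ) / (r - γ) = (1 - a * (r / γ)) / (1 - r / γ) by
        rw [div_eq_div_iff (by linarith) (by linarith)]; field_simp; ring]
      exact Real.log_div h1.ne' h2.ne'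
    simp only [Dfun, Ffun, ← ha_def, hlog, Real.sinh_eq, Real.exp_neg,
      hc0, hc1, hk3, hk2]
    field_simp
    ring
  have hev : ∀ᶠ r in nhdsWithin 0 (Set.Ioo 0 m), r ∈ Set.Ioo (0:ℝ) m :=
    eventually_mem_nhdsWithin
  -- the remainder terms tend to zero
  have hF3 : Tendsto (fun r => Ffun a γ r / r ^ 3)
      (nhdsWithin 0 (Set.Ioo 0 m)) (nhds 0) := by
    have hsmall : ∀ᶠ r in nhdsWithin 0 (Set.Ioo 0 m), |r - 0| < γ / (2 * a) :=
      (eventually_abs_sub_lt 0 (by positivity)).filter_mono nhdsWithin_le_nhds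
    refine squeeze_zero_norm'
      (a := fun r => (2 * (a ^ 4 + 1) / γ ^ 4) * r) ?_ ?_
    · filter_upwards [hev, hsmall] with r hr hs
      obtain ⟨hr0, hrm⟩ := hr
      rw [sub_zero, abs_of_nonneg hr0.le] at hs
      have hx0 : 0 ≤ r / γ := by positivity
      have hax0 : 0 ≤ a * (r / γ) := by positivity
      have hax : a * (r / γ) ≤ 1 / 2 := by
        rw [mul_div_assoc', div_le_iff₀ hγ]
        have := (lt_div_iff₀ (by positivity : (0:ℝ) < 2 * a)).mp hs
        nlinarith
      have hx : r / γ ≤ 1 / 2 := by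
        have : r / γ ≤ a * (r / γ) := by nlinarith
        linarith
      have e1 := Efun_abs_le hax0 hax
      have e2 := Efun_abs_le hx0 hx
      have hFb : |Ffun a γ r| ≤ 2 * (a ^ 4 + 1) * (r / γ) ^ 4 := by
        rw [Ffun_eq]
        calc |Efun (a * (r / γ)) - Efun (r / γ)|
            ≤ |Efun (a * (r / γ))| + |Efun (r / γ)| := abs_sub _ _
          _ ≤ 2 * (a * (r / γ)) ^ 4 + 2 * (r / γ) ^ 4 := by linarith
          _ = 2 * (a ^ 4 + 1) * (r / γ) ^ 4 := by ring
      have hr3 : (0:ℝ) < r ^ 3 := by positivity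
      rw [Real.norm_eq_abs, abs_div, abs_of_nonneg hr3.le]
      rw [div_le_iff₀ hr3]
      calc |Ffun a γ r| ≤ 2 * (a ^ 4 + 1) * (r / γ) ^ 4 := hFb
        _ = 2 * (a ^ 4 + 1) / γ ^ 4 * r * r ^ 3 := by
            field_simp
    · have : Tendsto (fun r : ℝ => (2 * (a ^ 4 + 1) / γ ^ 4) * r)
          (nhds 0) (nhds ((2 * (a ^ 4 + 1) / γ ^ 4) * 0)) :=
        (continuous_const.mul continuous_id).tendsto 0
      rw [mul_zero] at this
      exact this.mono_left nhdsWithin_le_nhds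
  have hF2 : Tendsto (fun r => Ffun a γ r / r ^ 2)
      (nhdsWithin 0 (Set.Ioo 0 m)) (nhds 0) := by
    have hid : Tendsto (fun r : ℝ => r) (nhdsWithin 0 (Set.Ioo 0 m)) (nhds 0) :=
      tendsto_id.mono_left nhdsWithin_le_nhds
    have := hF3.mul hid
    rw [mul_zero] at this
    refine this.congr' ?_
    filter_upwards [hev] with r hr
    have hr0 : r ≠ 0 := hr.1.ne'
    field_simp
  -- assemble
  have hc1r : Tendsto (fun r : ℝ => c1 * r) (nhdsWithin 0 (Set.Ioo 0 m))
      (nhds 0) := by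
    have : Tendsto (fun r : ℝ => c1 * r) (nhds 0) (nhds (c1 * 0)) :=
      (continuous_const.mul continuous_id).tendsto 0
    rw [mul_zero] at this
    exact this.mono_left nhdsWithin_le_nhds
  have hmain : Tendsto
      (fun r => c0 + c1 * r + k3 * (Ffun a γ r / r ^ 3)
        - k2 * (Ffun a γ r / r ^ 2))
      (nhdsWithin 0 (Set.Ioo 0 m)) (nhds c0) := by
    have hcst : Tendsto (fun _ : ℝ => c0) (nhdsWithin 0 (Set.Ioo 0 m))
        (nhds c0) := tendsto_const_nhds
    have h := ((hcst.add hc1r).add (hF3.const_mul k3)).sub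
      (hF2.const_mul k2)
    simpa using h
  have hval : c0 = -((Real.cosh (ω * lam) - 1) * (1 + 2 * a))
      / (3 * lam ^ 2 * γ) := by
    rw [hc0, Real.cosh_eq, Real.exp_neg, ← ha_def]
    field_simp
    ring
  rw [← hval]
  exact hmain.congr' (by filter_upwards [hev] with r hr using (key r hr).symm)
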